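/- Fix c > 0 and ω* > 0 and set q = exp(−cπ/(2ω*)) ∈ (0,1). Let 0 < β̲ ≤ β̄ and define γ_opt = max{ β̄·(1 − q⁴)/(3q − q³), β̲·(1 − q²)/q }. Then γ_opt minimizes the worst-case cost: for every γ > 0, sup_{β* ∈ [β̲, β̄]} J(γ, β*) ≥ sup_{β* ∈ [β̲, β̄]} J(γ_opt, β*), and moreover sup_{β* ∈ [β̲, β̄]} J(γ_opt, β*) = J(γ_opt, β̄). -/

import Mathlib

open Real

set_option maxHeartbeats 1000000

/-- Steady-state error of the adaptation dynamics (stable fixed-point regime). -/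
noncomputable def Js (q γ βs : ℝ) : ℝ := βs - γ * q / (1 - q ^ 2)

/-- Ultimate bound of the adaptation dynamics (unstable fixed-point regime). -/
noncomputable def Ju (q γ βs : ℝ) : ℝ := ((1 - q ^ 2) * βs + γ * q) / (1 + q ^ 2)

/-- Piecewise performance index of the slow adaptation dynamics. -/
noncomputable def J (q γ βs : ℝ) : ℝ :=
  if γ * q / (1 - q ^ 2) ≤ βs then Js q γ βs else Ju q γ βs

/-- The gain `γ_opt = max{β̄(1 − q⁴)/(3q − q³), β̲(1 − q²)/q}` solves the robust
min–max optimization `min_{γ>0} sup_{β* ∈ [β̲,β̄]} J(γ, β*)`, and at `γ_opt` the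
worst case is attained at `β* = β̄`. -/
theorem robust_optimal_gain (c ωs βlow βhigh : ℝ) (hc : 0 < c) (hωs : 0 < ωs)
    (hβlow : 0 < βlow) (hββ : βlow ≤ βhigh) :
    ∀ q : ℝ, q = Real.exp (-(c * π / (2 * ωs))) →
      ∀ γopt : ℝ, γopt = max (βhigh * (1 - q ^ 4) / (3 * q - q ^ 3))
          (βlow * (1 - q ^ 2) / q) →
        (∀ γ : ℝ, 0 < γ →
          sSup ((fun βs => J q γopt βs) '' Set.Icc βlow βhigh) ≤
            sSup ((fun βs => J q γ βs) '' Set.Icc βlow βhigh)) ∧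
        sSup ((fun βs => J q γopt βs) '' Set.Icc βlow βhigh) = J q γopt βhigh := by
  intro q hq γopt hγopt
  have hπ := Real.pi_pos
  have hβhigh : 0 < βhigh := lt_of_lt_of_le hβlow hββ
  have hq0 : 0 < q := hq ▸ Real.exp_pos _
  have hq1 : q < 1 := by
    rw [hq]
    have h1 : -(c * π / (2 * ωs)) < 0 := by
      have : 0 < c * π / (2 * ωs) := by positivity
      linarith
    calc Real.exp (-(c * π / (2 * ωs))) < Real.exp 0 := Real.exp_lt_exp.mpr h1
    _ = 1 := Real.exp_zero
  have hq2 : 0 < 1 - q ^ 2 := by nlinarith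
  have hq3 : 0 < (1:ℝ) + q ^ 2 := by positivity
  have hq4 : 0 < 3 - q ^ 2 := by nlinarith
  have h3q : 0 < 3 * q - q ^ 3 := by nlinarith
  obtain ⟨tstar, htstar_def⟩ : ∃ x : ℝ, x = βhigh * (1 + q ^ 2) / (3 - q ^ 2) := ⟨_, rfl⟩
  have htstar : tstar * (3 - q ^ 2) = βhigh * (1 + q ^ 2) := by
    rw [htstar_def]; field_simp
  have htstar_lt : tstar < βhigh := by nlinarith
  obtain ⟨t0, ht0_def⟩ : ∃ x : ℝ, x = max tstar βlow := ⟨_, rfl⟩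
  have ht0_ts : tstar ≤ t0 := by rw [ht0_def]; exact le_max_left _ _
  have ht0_bl : βlow ≤ t0 := by rw [ht0_def]; exact le_max_right _ _
  have ht0_le : t0 ≤ βhigh := by rw [ht0_def]; exact max_le htstar_lt.le hββ
  have hγq : γopt * q / (1 - q ^ 2) = t0 := by
    rw [hγopt, ht0_def, mul_div_assoc,
      max_mul_of_nonneg _ _ (le_of_lt (div_pos hq0 hq2))]
    congr 1
    · rw [htstar_def]
      field_simp
      ring
    · field_simp
  have hγq2 : γopt * q = t0 * (1 - q ^ 2) := by
    rw [← hγq]; field_simp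
  have hγopt0 : 0 < γopt := by
    have hA : 0 < βhigh * (1 - q ^ 4) / (3 * q - q ^ 3) := by
      have h14 : 0 < 1 - q ^ 4 := by nlinarith
      exact div_pos (mul_pos hβhigh h14) h3q
    exact lt_of_lt_of_le hA (hγopt ▸ le_max_left _ _)
  -- the value at the right endpoint
  have hJhigh : J q γopt βhigh = βhigh - t0 := by
    simp only [J, Js, hγq, if_pos ht0_le]
  -- bound at γopt
  have hbound : ∀ β ∈ Set.Icc βlow βhigh, J q γopt β ≤ βhigh - t0 := by
    rintro β ⟨hβ1, hβ2⟩
    simp only [J, Js, Ju, hγq]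
    split_ifs with h
    · linarith
    · push_neg at h
      have hblt : βlow < t0 := lt_of_le_of_lt hβ1 h
      have htb : βlow ≤ tstar := by
        by_contra hcon
        push_neg at hcon
        rw [ht0_def, max_eq_right hcon.le] at hblt
        exact lt_irrefl _ hblt
      have ht0eq : t0 = tstar := by rw [ht0_def, max_eq_left htb]
      rw [div_le_iff₀ hq3, ht0eq]
      rw [ht0eq] at h hγq2
      linarith [htstar, hγq2, mul_le_mul_of_nonneg_left h.le hq2.le]
  -- boundedness above of the image sets
  have hbddA : ∀ γ : ℝ, 0 ≤ γ →
      BddAbove ((fun βs => J q γ βs) '' Set.Icc βlow βhigh) := by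
    intro γ hγ
    refine ⟨max βhigh (((1 - q ^ 2) * βhigh + γ * q) / (1 + q ^ 2)), ?_⟩
    rintro x ⟨β, ⟨hβ1, hβ2⟩, rfl⟩
    simp only [J, Js, Ju]
    split_ifs with h
    · have h0 : 0 ≤ γ * q / (1 - q ^ 2) := by positivity
      exact le_max_of_le_left (by linarith)
    · refine le_max_of_le_right ?_
      rw [div_le_div_iff₀ hq3 hq3]
      linarith [mul_nonneg (mul_nonneg hq2.le hq3.le) (sub_nonneg.mpr hβ2)]
  have hne : ((fun βs => J q γopt βs) '' Set.Icc βlow βhigh).Nonempty :=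
    ⟨_, ⟨βlow, ⟨le_refl _, hββ⟩, rfl⟩⟩
  -- lower bound for arbitrary γ
  have hlow : ∀ γ : ℝ, 0 < γ →
      βhigh - t0 ≤ sSup ((fun βs => J q γ βs) '' Set.Icc βlow βhigh) := by
    intro γ hγ
    have hbd := hbddA γ hγ.le
    obtain ⟨t, ht_def⟩ : ∃ x : ℝ, x = γ * q / (1 - q ^ 2) := ⟨_, rfl⟩
    have htq : γ * q = t * (1 - q ^ 2) := by rw [ht_def]; field_simp
    by_cases hct : t ≤ t0
    · have hJ : J q γ βhigh = βhigh - t := by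
        simp only [J, Js, ← ht_def, if_pos (le_trans hct ht0_le)]
      calc βhigh - t0 ≤ βhigh - t := by linarith
      _ = J q γ βhigh := hJ.symm
      _ ≤ _ := le_csSup hbd ⟨βhigh, ⟨hββ, le_refl _⟩, rfl⟩
    · push_neg at hct
      obtain ⟨V, hV_def⟩ : ∃ x : ℝ, x = βhigh - t0 := ⟨_, rfl⟩
      obtain ⟨β0, hβ0_def⟩ : ∃ x : ℝ, x = (V * (1 + q ^ 2) - γ * q) / (1 - q ^ 2) := ⟨_, rfl⟩
      have hβ0eq : β0 * (1 - q ^ 2) = V * (1 + q ^ 2) - γ * q := by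
        rw [hβ0_def]; field_simp
      have hkey : V * (1 + q ^ 2) ≤ 2 * tstar * (1 - q ^ 2) := by
        have h1 : tstar * (1 + q ^ 2) ≤ t0 * (1 + q ^ 2) :=
          mul_le_mul_of_nonneg_right ht0_ts hq3.le
        rw [hV_def]
        linarith [htstar, h1]
      have hts_t : tstar < t := lt_of_le_of_lt ht0_ts hct
      have hts_t2 : tstar * (1 - q ^ 2) < t * (1 - q ^ 2) :=
        mul_lt_mul_of_pos_right hts_t hq2
      have hβ0t : β0 < t := by
        have h3 : β0 * (1 - q ^ 2) < t * (1 - q ^ 2) := by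
          linarith [hβ0eq, hkey, htq, hts_t2]
        exact (mul_lt_mul_iff_of_pos_right hq2).mp h3
      have hβ0h : β0 < βhigh := by
        have h4 : β0 * (1 - q ^ 2) < βhigh * (1 - q ^ 2) := by
          linarith [hβ0eq, hkey, htq, hts_t2, mul_lt_mul_of_pos_right htstar_lt hq2]
        exact (mul_lt_mul_iff_of_pos_right hq2).mp h4
      obtain ⟨m, hm_def⟩ : ∃ x : ℝ, x = min t βhigh := ⟨_, rfl⟩
      have hβ0m : β0 < m := by rw [hm_def]; exact lt_min hβ0t hβ0h
      have hmt : m ≤ t := by rw [hm_def]; exact min_le_left _ _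
      have hmh : m ≤ βhigh := by rw [hm_def]; exact min_le_right _ _
      obtain ⟨β, hβ_def⟩ : ∃ x : ℝ, x = max βlow ((β0 + m) / 2) := ⟨_, rfl⟩
      have hβlt : βlow < t := lt_of_le_of_lt ht0_bl hct
      have hmid : (β0 + m) / 2 < m := by linarith
      have hβ1 : βlow ≤ β := by rw [hβ_def]; exact le_max_left _ _
      have hβ2 : β ≤ βhigh := by
        rw [hβ_def]; exact max_le hββ (le_of_lt (lt_of_lt_of_le hmid hmh))
      have hβt : β < t := by
        rw [hβ_def]; exact max_lt hβlt (lt_of_lt_of_le hmid hmt)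
      have hβ0β : β0 ≤ β := by
        rw [hβ_def]; exact le_trans (by linarith : β0 ≤ (β0 + m) / 2) (le_max_right _ _)
      have hJβ : J q γ β = Ju q γ β := by
        simp only [J, ← ht_def, if_neg (not_le.mpr hβt)]
      have hJuV : V ≤ Ju q γ β := by
        rw [Ju, le_div_iff₀ hq3]
        linarith [hβ0eq, mul_le_mul_of_nonneg_right hβ0β hq2.le]
      calc βhigh - t0 = V := hV_def.symm
      _ ≤ J q γ β := by rw [hJβ]; exact hJuV
      _ ≤ _ := le_csSup hbd ⟨β, ⟨hβ1, hβ2⟩, rfl⟩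
  have heq : sSup ((fun βs => J q γopt βs) '' Set.Icc βlow βhigh) = J q γopt βhigh := by
    apply le_antisymm
    · apply csSup_le hne
      rintro x ⟨β, hβ, rfl⟩
      rw [hJhigh]
      exact hbound β hβ
    · exact le_csSup (hbddA γopt hγopt0.le) ⟨βhigh, ⟨hββ, le_refl _⟩, rfl⟩
  constructor
  · intro γ hγ
    rw [heq, hJhigh]
    exact hlow γ hγ
  · exact heq
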